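/- For a pointed topological (or diffeological) space (X, x₀) and n ≥ 0, the map sending a class of f : (I^n, ∂I^n) → (X, x₀) to the class of the map ∂I^{n+1} → X that equals f on I^n × {0} and is constant x₀ on J^n induces a natural bijection πₙ(X, x₀) ≅ [∂I^{n+1}, e ; X, x₀], the set of (smooth) homotopy classes of maps (∂I^{n+1}, e) → (X, x₀), where e = (1,…,1) ∈ ∂I^{n+1}. -/

import Mathlib

def cube (n : ℕ) : Set (Fin n → ℝ) := {t | ∀ j, t j ∈ Set.Icc (0 : ℝ) 1}

/-- The boundary `∂Iⁿ`. -/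
def bdry (n : ℕ) : Set (Fin n → ℝ) := {t | t ∈ cube n ∧ ∃ j, t j = 0 ∨ t j = 1}

variable {X : Type*} [TopologicalSpace X]

/-- A representative of an element of `πₙ(X, x₀)`: a continuous map `(Iⁿ, ∂Iⁿ) → (X, x₀)`. -/
def IsAbsMap (n : ℕ) (x₀ : X) (f : (Fin n → ℝ) → X) : Prop :=
  Continuous f ∧ (∀ t ∈ bdry n, f t = x₀)

/-- Homotopy through maps `(Iⁿ, ∂Iⁿ) → (X, x₀)`. -/
def AbsHtp (n : ℕ) (x₀ : X) (f g : {f : (Fin n → ℝ) → X // IsAbsMap n x₀ f}) : Prop :=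
  ∃ H : (Fin n → ℝ) × ℝ → X, Continuous H ∧
    (∀ t ∈ cube n, H (t, 0) = f.1 t) ∧ (∀ t ∈ cube n, H (t, 1) = g.1 t) ∧
    (∀ s ∈ Set.Icc (0 : ℝ) 1, ∀ t ∈ bdry n, H (t, s) = x₀)

/-- The corner point `e = (1,…,1)` of `∂Iⁿ⁺¹`. -/
def cornerPt (n : ℕ) : bdry (n + 1) :=
  ⟨fun _ => 1, fun _ => ⟨zero_le_one, le_refl 1⟩, ⟨0, Or.inr rfl⟩⟩

/-- A representative of an element of `[∂Iⁿ⁺¹, e ; X, x₀]`: a continuous map on the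
boundary of the cube sending `e` to `x₀`. -/
def IsSphMap (n : ℕ) (x₀ : X) (f : bdry (n + 1) → X) : Prop :=
  Continuous f ∧ f (cornerPt n) = x₀

/-- Homotopy through maps `(∂Iⁿ⁺¹, e) → (X, x₀)`. -/
def SphHtp (n : ℕ) (x₀ : X) (f g : {f : bdry (n + 1) → X // IsSphMap n x₀ f}) : Prop :=
  ∃ H : (bdry (n + 1)) × ℝ → X, Continuous H ∧
    (∀ t, H (t, 0) = f.1 t) ∧ (∀ t, H (t, 1) = g.1 t) ∧
    (∀ s ∈ Set.Icc (0 : ℝ) 1, H (cornerPt n, s) = x₀)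

/-- The map which extends `f : (Iⁿ, ∂Iⁿ) → (X, x₀)` over `∂Iⁿ⁺¹` by `f` on `Iⁿ × {0}`
and the constant `x₀` on `Jⁿ`. -/
noncomputable def sphExt (n : ℕ) (x₀ : X) (f : (Fin n → ℝ) → X) :
    bdry (n + 1) → X := fun p =>
  if p.1 (Fin.last n) = 0 then f (fun j => p.1 j.castSucc) else x₀

namespace Stmt13

/-! ### clamp -/

noncomputable def cl (r : ℝ) : ℝ := max 0 (min r 1)

lemma cl_cont : Continuous cl := continuous_const.max (continuous_id.min continuous_const)

lemma cl_nonneg (r : ℝ) : 0 ≤ cl r := le_max_left _ _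

lemma cl_le_one (r : ℝ) : cl r ≤ 1 := max_le zero_le_one (min_le_right _ _)

lemma cl_of_mem {r : ℝ} (h : r ∈ Set.Icc (0:ℝ) 1) : cl r = r := by
  rcases h with ⟨h0, h1⟩
  simp [cl, min_eq_left h1, max_eq_right h0]

lemma cl_zero : cl 0 = 0 := cl_of_mem ⟨le_refl _, zero_le_one⟩

lemma cl_one : cl 1 = 1 := cl_of_mem ⟨zero_le_one, le_refl _⟩

lemma cl_mem (r : ℝ) : cl r ∈ Set.Icc (0:ℝ) 1 := ⟨cl_nonneg r, cl_le_one r⟩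

/-! ### sup-norm helpers -/

lemma exists_attain {k : ℕ} (x : Fin k → ℝ) (hx : ‖x‖ ≠ 0) : ∃ j, |x j| = ‖x‖ := by
  rcases Nat.eq_zero_or_pos k with hk | hk
  · subst hk
    exact absurd (by simp [Pi.norm_def] : ‖x‖ = 0) hx
  · have : Nonempty (Fin k) := ⟨⟨0, hk⟩⟩
    obtain ⟨b, -, hb⟩ := Finset.exists_mem_eq_sup (Finset.univ : Finset (Fin k))
      Finset.univ_nonempty (fun b => ‖x b‖₊)
    exact ⟨b, by rw [Pi.norm_def, hb]; simp [Real.norm_eq_abs]⟩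

lemma pi_norm_le_one {k : ℕ} {x : Fin k → ℝ} (h : ∀ j, |x j| ≤ 1) : ‖x‖ ≤ 1 :=
  (pi_norm_le_iff_of_nonneg zero_le_one).2 fun j => by
    simpa [Real.norm_eq_abs] using h j

lemma abs_le_pi_norm {k : ℕ} (x : Fin k → ℝ) (j : Fin k) : |x j| ≤ ‖x‖ := by
  simpa [Real.norm_eq_abs] using norm_le_pi_norm x j

/-! ### coordinate helpers -/

lemma unit_of_abs {v : ℝ} (h : |2*v - 1| ≤ 1) : v ∈ Set.Icc (0:ℝ) 1 := by
  rw [abs_le] at h; constructor <;> linarith [h.1, h.2]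

lemma abs_le_of_unit {v : ℝ} (h : v ∈ Set.Icc (0:ℝ) 1) : |2*v - 1| ≤ 1 := by
  rw [abs_le]; constructor <;> [linarith [h.1]; linarith [h.2]]

lemma coord_extreme {a : ℝ} (h : |2*a - 1| = 1) : a = 0 ∨ a = 1 := by
  rcases abs_eq (by norm_num : (0:ℝ) ≤ 1) |>.1 h with h' | h'
  · right; linarith
  · left; linarith

/-! ### dd and inJ -/

variable {n : ℕ}

noncomputable def dd (t : Fin (n+1) → ℝ) : ℝ := ‖fun j : Fin n => 2 * t (Fin.castSucc j) - 1‖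

lemma dd_cont : Continuous (dd (n := n)) := by
  apply continuous_norm.comp
  exact continuous_pi fun j => (continuous_const.mul (continuous_apply _)).sub continuous_const

lemma dd_nonneg (t : Fin (n+1) → ℝ) : 0 ≤ dd t := norm_nonneg _

lemma abs_le_dd (t : Fin (n+1) → ℝ) (j : Fin n) : |2 * t (Fin.castSucc j) - 1| ≤ dd t :=
  abs_le_pi_norm (fun j : Fin n => 2 * t (Fin.castSucc j) - 1) j

lemma dd_le_one {t : Fin (n+1) → ℝ} (ht : t ∈ cube (n+1)) : dd t ≤ 1 :=
  pi_norm_le_one fun j => abs_le_of_unit (ht _)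

lemma dd_ge_one_of_extreme {t : Fin (n+1) → ℝ} {j : Fin n}
    (hj : t (Fin.castSucc j) = 0 ∨ t (Fin.castSucc j) = 1) : 1 ≤ dd t := by
  refine le_trans ?_ (abs_le_dd t j)
  rcases hj with h | h <;> rw [h] <;> norm_num

def inJ (t : Fin (n+1) → ℝ) : Prop := -dd t ≤ 2 * t (Fin.last n) - 1

lemma inJ_of_last_ne {p : bdry (n+1)} (h : p.1 (Fin.last n) ≠ 0) : inJ p.1 := by
  obtain ⟨hc, j, hj⟩ := p.2
  rcases eq_or_ne j (Fin.last n) with rfl | hne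
  · rcases hj with h0 | h1
    · exact absurd h0 h
    · rw [inJ, h1]
      have := dd_nonneg p.1
      linarith
  · obtain ⟨i, rfl⟩ := Fin.exists_castSucc_eq.2 hne
    have h1 := dd_ge_one_of_extreme hj
    have h2 := (hc (Fin.last n)).1
    rw [inJ]; linarith

lemma dd_eq_one_of_bottom_inJ {p : bdry (n+1)} (h0 : p.1 (Fin.last n) = 0)
    (hJ : inJ p.1) : dd p.1 = 1 := by
  have h1 : 1 ≤ dd p.1 := by rw [inJ, h0] at hJ; linarith
  exact le_antisymm (dd_le_one p.2.1) h1

lemma dd_eq_one_mem {t : Fin (n+1) → ℝ} (ht : t ∈ cube (n+1)) (hd : dd t = 1) :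
    (fun j : Fin n => t (Fin.castSucc j)) ∈ bdry n := by
  refine ⟨fun j => ht _, ?_⟩
  obtain ⟨j, hj⟩ := exists_attain _ (by rw [← dd, hd]; norm_num)
  exact ⟨j, coord_extreme (by rw [hj, ← dd, hd])⟩


/-! ### frontier of the bottom face, gluing -/

lemma frontier_bottom {α : Type*} [TopologicalSpace α] {φ : α → (Fin (n+1) → ℝ)}
    (hφ : Continuous φ) (hmem : ∀ a, φ a ∈ bdry (n+1)) :
    frontier {a | φ a (Fin.last n) = 0} ⊆
      {a | φ a (Fin.last n) = 0 ∧ dd (φ a) = 1} := by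
  intro a ha
  have hcl : IsClosed {a | φ a (Fin.last n) = 0} :=
    isClosed_eq ((continuous_apply _).comp hφ) continuous_const
  have h0 : φ a (Fin.last n) = 0 := by
    have := frontier_subset_closure (s := {a | φ a (Fin.last n) = 0}) ha
    rwa [hcl.closure_eq] at this
  refine ⟨h0, ?_⟩
  by_contra hd
  have hdlt : dd (φ a) < 1 := lt_of_le_of_ne (dd_le_one (hmem a).1) hd
  set U : Set α := {b | dd (φ b) < 1 ∧ φ b (Fin.last n) < 1/2} with hU
  have hUopen : IsOpen U := by
    apply IsOpen.inter
    · exact isOpen_lt (dd_cont.comp hφ) continuous_const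
    · exact isOpen_lt ((continuous_apply _).comp hφ) continuous_const
  have haU : a ∈ U := ⟨hdlt, by rw [h0]; norm_num⟩
  have hsub : U ⊆ {a | φ a (Fin.last n) = 0} := by
    intro b hb
    obtain ⟨hc, j, hj⟩ := hmem b
    rcases eq_or_ne j (Fin.last n) with rfl | hne
    · rcases hj with h' | h'
      · exact h'
      · exact absurd hb.2 (by rw [h']; norm_num)
    · obtain ⟨i, rfl⟩ := Fin.exists_castSucc_eq.2 hne
      exact absurd (lt_of_le_of_lt (dd_ge_one_of_extreme hj) hb.1) (lt_irrefl 1)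
  have hint : a ∈ interior {a | φ a (Fin.last n) = 0} :=
    interior_maximal hsub hUopen haU
  exact ha.2 hint

lemma cont_glue {x₀ : X} {G : (Fin n → ℝ) × ℝ → X}
    (hG : Continuous G) (hGb : ∀ s ∈ Set.Icc (0:ℝ) 1, ∀ t ∈ bdry n, G (t, s) = x₀) :
    Continuous fun z : ↥(bdry (n+1)) × ℝ =>
      if z.1.1 (Fin.last n) = 0 then G (fun j => z.1.1 j.castSucc, cl z.2) else x₀ := by
  have hφ : Continuous fun z : ↥(bdry (n+1)) × ℝ => z.1.1 :=
    continuous_subtype_val.comp continuous_fst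
  apply Continuous.if
  · intro a ha
    have h := frontier_bottom hφ (fun a => a.1.2) ha
    exact hGb _ (cl_mem _) _ (dd_eq_one_mem a.1.2.1 h.2)
  · apply hG.comp
    refine Continuous.prodMk ?_ (cl_cont.comp continuous_snd)
    exact continuous_pi fun j => (continuous_apply _).comp hφ
  · exact continuous_const

variable {x₀ : X}

lemma sphExt_cont {f : (Fin n → ℝ) → X} (hf : IsAbsMap n x₀ f) :
    Continuous (sphExt n x₀ f) := by
  have h : sphExt n x₀ f = fun p : ↥(bdry (n+1)) =>
      (fun z : ↥(bdry (n+1)) × ℝ =>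
        if z.1.1 (Fin.last n) = 0 then f (fun j => z.1.1 j.castSucc) else x₀) (p, 0) := by
    funext p; rfl
  rw [h]
  have := cont_glue (x₀ := x₀) (G := fun z => f z.1) (hf.1.comp continuous_fst)
    (fun s _ t ht => hf.2 t ht)
  exact (this.comp (continuous_id.prodMk continuous_const))

lemma sphExt_eq_of_inJ {f : (Fin n → ℝ) → X} (hf : IsAbsMap n x₀ f)
    {p : bdry (n+1)} (hp : inJ p.1) : sphExt n x₀ f p = x₀ := by
  rw [sphExt]
  split_ifs with h
  · exact hf.2 _ (dd_eq_one_mem p.2.1 (dd_eq_one_of_bottom_inJ h hp))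
  · rfl

lemma isSphMap_sphExt {f : (Fin n → ℝ) → X} (hf : IsAbsMap n x₀ f) :
    IsSphMap n x₀ (sphExt n x₀ f) := by
  refine ⟨sphExt_cont hf, ?_⟩
  rw [sphExt]
  exact if_neg (by norm_num [cornerPt])

/-! ### centering -/

def cen {k : ℕ} (t : Fin k → ℝ) : Fin k → ℝ := fun j => 2 * t j - 1
noncomputable def dec {k : ℕ} (y : Fin k → ℝ) : Fin k → ℝ := fun j => (y j + 1) / 2

lemma dec_cen {k : ℕ} (t : Fin k → ℝ) : dec (cen t) = t := by
  funext j; show (2 * t j - 1 + 1) / 2 = t j; ring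

lemma cen_cont {k : ℕ} : Continuous (cen (k := k)) :=
  continuous_pi fun j => (continuous_const.mul (continuous_apply _)).sub continuous_const

lemma dec_cont {k : ℕ} : Continuous (dec (k := k)) :=
  continuous_pi fun j => ((continuous_apply _).add continuous_const).div_const _

lemma cen_norm_one {p : Fin (n+1) → ℝ} (hp : p ∈ bdry (n+1)) : ‖cen p‖ = 1 := by
  obtain ⟨hc, j, hj⟩ := hp
  refine le_antisymm (pi_norm_le_one fun i => abs_le_of_unit (hc i)) ?_
  refine le_trans ?_ (abs_le_pi_norm (cen p) j)
  rcases hj with h | h <;> rw [cen, h] <;> norm_num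

lemma dec_mem {y : Fin (n+1) → ℝ} (hy : ‖y‖ = 1) : dec y ∈ bdry (n+1) := by
  constructor
  · intro j
    have := abs_le_pi_norm y j
    rw [hy, abs_le] at this
    exact ⟨by show 0 ≤ (y j + 1)/2; linarith [this.1], by show (y j + 1)/2 ≤ 1; linarith [this.2]⟩
  · obtain ⟨j, hj⟩ := exists_attain y (by rw [hy]; norm_num)
    rw [hy] at hj
    rcases abs_eq (by norm_num : (0:ℝ) ≤ 1) |>.1 hj with h | h
    · exact ⟨j, Or.inr (by show (y j + 1)/2 = 1; rw [h]; norm_num)⟩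
    · exact ⟨j, Or.inl (by show (y j + 1)/2 = 0; rw [h]; norm_num)⟩


/-! ### the stretch map Ξ -/

noncomputable def bz1 (z : ↥(bdry (n+1)) × ℝ) : Fin (n+1) → ℝ :=
  fun j => if j = Fin.last n then 0 else z.1.1 j + cl z.2 * (z.1.1 j - 1/2)

noncomputable def Mz (z : ↥(bdry (n+1)) × ℝ) : ℝ := max (dd z.1.1) (1 + cl z.2)⁻¹

noncomputable def bz2 (z : ↥(bdry (n+1)) × ℝ) : Fin (n+1) → ℝ :=
  fun j => if j = Fin.last n then (1 + cl z.2) * Mz z - 1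
           else ((2 * z.1.1 j - 1) / Mz z + 1) / 2

noncomputable def sigp (z : ↥(bdry (n+1)) × ℝ) : Fin (n+1) → ℝ :=
  fun j => if j = Fin.last n then
             z.1.1 (Fin.last n) + cl z.2 * (1 - z.1.1 (Fin.last n))
           else z.1.1 j

noncomputable def xiA (z : ↥(bdry (n+1)) × ℝ) : Fin (n+1) → ℝ :=
  if z.1.1 (Fin.last n) = 0 then
    (if (1 + cl z.2) * dd z.1.1 ≤ 1 then bz1 z else bz2 z)
  else sigp z

lemma one_add_cl_pos (s : ℝ) : (0:ℝ) < 1 + cl s := by linarith [cl_nonneg s]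

lemma inv_one_add_cl_le_one (s : ℝ) : (1 + cl s)⁻¹ ≤ 1 := by
  rw [inv_le_one_iff₀]; right; linarith [cl_nonneg s]

lemma Mz_pos (z : ↥(bdry (n+1)) × ℝ) : 0 < Mz z :=
  lt_of_lt_of_le (inv_pos.2 (one_add_cl_pos z.2)) (le_max_right _ _)

lemma hphi_cont : Continuous fun z : ↥(bdry (n+1)) × ℝ => z.1.1 :=
  continuous_subtype_val.comp continuous_fst

lemma coord_cont (j : Fin (n+1)) : Continuous fun z : ↥(bdry (n+1)) × ℝ => z.1.1 j :=
  (continuous_apply j).comp hphi_cont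

lemma cls_cont : Continuous fun z : ↥(bdry (n+1)) × ℝ => cl z.2 :=
  cl_cont.comp continuous_snd

lemma Mz_cont : Continuous (Mz (n := n)) := by
  refine Continuous.max (dd_cont.comp hphi_cont) ?_
  exact (continuous_const.add cls_cont).inv₀ fun z => (one_add_cl_pos z.2).ne'

lemma bz1_cont : Continuous (bz1 (n := n)) := by
  refine continuous_pi fun j => ?_
  by_cases hj : j = Fin.last n
  · simp only [bz1, if_pos hj]
    exact continuous_const
  · simp only [bz1, if_neg hj]
    exact (coord_cont j).add (cls_cont.mul ((coord_cont j).sub continuous_const))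

lemma bz2_cont : Continuous (bz2 (n := n)) := by
  refine continuous_pi fun j => ?_
  by_cases hj : j = Fin.last n
  · simp only [bz2, hj, if_true]
    exact (((continuous_const.add cls_cont).mul Mz_cont).sub continuous_const)
  · simp only [bz2, if_neg hj]
    refine (Continuous.add ?_ continuous_const).div_const _
    exact Continuous.div ((continuous_const.mul (coord_cont j)).sub continuous_const)
      Mz_cont fun z => (Mz_pos z).ne'

lemma sigp_cont : Continuous (sigp (n := n)) := by
  refine continuous_pi fun j => ?_
  by_cases hj : j = Fin.last n
  · simp only [sigp, hj, if_true]
    exact (coord_cont _).add (cls_cont.mul (continuous_const.sub (coord_cont _)))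
  · simp only [sigp, if_neg hj]
    exact coord_cont j

lemma xiA_cont : Continuous (xiA (n := n)) := by
  apply Continuous.if
  · intro z hz
    obtain ⟨hv, hd⟩ := frontier_bottom hphi_cont (fun z => z.1.2) hz
    have hs0 := cl_nonneg z.2
    funext j
    by_cases hj : j = Fin.last n
    · subst hj
      rw [sigp, if_pos rfl, hv]
      split_ifs with hb
      · rw [bz1, if_pos rfl]
        have : cl z.2 ≤ 0 := by rw [hd] at hb; linarith
        have : cl z.2 = 0 := le_antisymm this hs0
        rw [this]; ring
      · rw [bz2, if_pos rfl, Mz, hd, max_eq_left (inv_one_add_cl_le_one z.2)]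
        ring
    · rw [sigp, if_neg hj]
      split_ifs with hb
      · rw [bz1, if_neg hj]
        have h1 : cl z.2 ≤ 0 := by rw [hd] at hb; linarith
        have h2 : cl z.2 = 0 := le_antisymm h1 hs0
        rw [h2]; ring
      · rw [bz2, if_neg hj, Mz, hd, max_eq_left (inv_one_add_cl_le_one z.2)]
        ring
  · apply Continuous.if
    · intro z hz
      have hz' := frontier_le_subset_eq (Continuous.mul (continuous_const.add cls_cont)
        (dd_cont.comp hphi_cont)) continuous_const hz
      have heq : (1 + cl z.2) * dd z.1.1 = 1 := hz'
      have h1s := one_add_cl_pos z.2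
      have hdd : dd z.1.1 = (1 + cl z.2)⁻¹ := by
        field_simp
        linarith [heq]
      have hM : Mz z = dd z.1.1 := by rw [Mz, hdd, max_self]
      funext j
      by_cases hj : j = Fin.last n
      · rw [bz1, if_pos hj, bz2, if_pos hj, hM, hdd]
        field_simp
        norm_num
      · rw [bz1, if_neg hj, bz2, if_neg hj, hM, hdd]
        field_simp
        ring
    · exact bz1_cont
    · exact bz2_cont
  · exact sigp_cont

lemma xiA_mem (z : ↥(bdry (n+1)) × ℝ) : xiA z ∈ bdry (n+1) := by
  have hpc : z.1.1 ∈ cube (n+1) := z.1.2.1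
  have hpe := z.1.2.2
  have hs0 : (0:ℝ) ≤ cl z.2 := cl_nonneg z.2
  have hs1 : cl z.2 ≤ 1 := cl_le_one z.2
  rw [xiA]
  split_ifs with hv hb
  · -- bz1
    constructor
    · intro j
      by_cases hj : j = Fin.last n
      · simp only [bz1, if_pos hj]; exact ⟨le_refl 0, zero_le_one⟩
      · simp only [bz1, if_neg hj]
        obtain ⟨i, rfl⟩ := Fin.exists_castSucc_eq.2 hj
        apply unit_of_abs
        have he : 2 * (z.1.1 (Fin.castSucc i) + cl z.2 * (z.1.1 (Fin.castSucc i) - 1/2)) - 1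
            = (1 + cl z.2) * (2 * z.1.1 (Fin.castSucc i) - 1) := by ring
        rw [he, abs_mul, abs_of_nonneg (by linarith : (0:ℝ) ≤ 1 + cl z.2)]
        calc (1 + cl z.2) * |2 * z.1.1 (Fin.castSucc i) - 1|
            ≤ (1 + cl z.2) * dd z.1.1 :=
              mul_le_mul_of_nonneg_left (abs_le_dd z.1.1 i) (by linarith)
          _ ≤ 1 := hb
    · exact ⟨Fin.last n, Or.inl (by simp [bz1])⟩
  · -- bz2
    push_neg at hb
    have h1s : (0:ℝ) < 1 + cl z.2 := by linarith
    have hdle : dd z.1.1 ≤ 1 := dd_le_one hpc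
    have hinv : (1 + cl z.2)⁻¹ ≤ dd z.1.1 := by
      rw [inv_le_iff_one_le_mul₀ h1s]
      nlinarith
    have hM : Mz z = dd z.1.1 := max_eq_left hinv
    have hdpos : 0 < dd z.1.1 := lt_of_lt_of_le (inv_pos.2 h1s) hinv
    constructor
    · intro j
      by_cases hj : j = Fin.last n
      · simp only [bz2, if_pos hj, hM]
        constructor
        · nlinarith
        · nlinarith
      · simp only [bz2, if_neg hj, hM]
        obtain ⟨i, rfl⟩ := Fin.exists_castSucc_eq.2 hj
        apply unit_of_abs
        have he : 2 * (((2 * z.1.1 (Fin.castSucc i) - 1) / dd z.1.1 + 1) / 2) - 1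
            = (2 * z.1.1 (Fin.castSucc i) - 1) / dd z.1.1 := by ring
        rw [he, abs_div, abs_of_pos hdpos, div_le_one hdpos]
        exact abs_le_dd z.1.1 i
    · obtain ⟨i, hi⟩ := exists_attain _ (by rw [← dd]; exact hdpos.ne')
      rw [← dd] at hi
      refine ⟨Fin.castSucc i, ?_⟩
      simp only [bz2, if_neg (Fin.castSucc_lt_last i).ne, hM]
      rcases (abs_eq (dd_nonneg z.1.1)).1 hi with h | h
      · right; rw [h, div_self hdpos.ne']; ring
      · left; rw [h, neg_div, div_self hdpos.ne']; ring
  · -- sigp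
    constructor
    · intro j
      by_cases hj : j = Fin.last n
      · simp only [sigp, if_pos hj]
        have h0 := (hpc (Fin.last n)).1
        have h1 := (hpc (Fin.last n)).2
        constructor
        · nlinarith
        · nlinarith
      · simp only [sigp, if_neg hj]; exact hpc j
    · obtain ⟨j, hj⟩ := hpe
      by_cases hjl : j = Fin.last n
      · subst hjl
        rcases hj with h | h
        · exact absurd h hv
        · refine ⟨Fin.last n, Or.inr ?_⟩
          simp only [sigp, if_pos rfl, h, if_true]; ring
      · exact ⟨j, by simp only [sigp, if_neg hjl]; exact hj⟩

noncomputable def Xi (z : ↥(bdry (n+1)) × ℝ) : ↥(bdry (n+1)) := ⟨xiA z, xiA_mem z⟩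

lemma Xi_cont : Continuous (Xi (n := n)) := xiA_cont.subtype_mk _


/-! ### Ξ properties -/

lemma dd_eq_mul {w t : Fin (n+1) → ℝ} {c : ℝ} (hc : 0 ≤ c)
    (h : ∀ i : Fin n, 2 * w (Fin.castSucc i) - 1 = c * (2 * t (Fin.castSucc i) - 1)) :
    dd w = c * dd t := by
  rw [dd, dd]
  have he : (fun i : Fin n => 2 * w (Fin.castSucc i) - 1)
      = c • (fun i : Fin n => 2 * t (Fin.castSucc i) - 1) := by
    funext i
    exact h i
  rw [he, norm_smul, Real.norm_eq_abs, abs_of_nonneg hc]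

lemma Xi_s_eq {p : ↥(bdry (n+1))} {s : ℝ} (hs : cl s = 0) : Xi (p, s) = p := by
  apply Subtype.ext
  show xiA (p, s) = p.1
  rw [xiA]
  have hcl : cl (p, s).2 = 0 := hs
  split_ifs with hv hb
  · funext j
    by_cases hj : j = Fin.last n
    · simp only [bz1, if_pos hj, hj, if_true]; exact hv.symm
    · simp only [bz1, if_neg hj, hcl, if_true]; ring
  · exfalso
    rw [hcl] at hb
    have := dd_le_one (p.2.1)
    push_neg at hb
    norm_num at hb
    exact absurd this (not_le.2 hb)
  · funext j
    by_cases hj : j = Fin.last n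
    · simp only [sigp, if_pos hj, hcl, hj, if_true]; ring
    · simp only [sigp, if_neg hj, if_true]
  done

lemma cornerPt_coord (j : Fin (n+1)) : (cornerPt n).1 j = 1 := rfl

lemma Xi_corner (s : ℝ) : Xi (cornerPt n, s) = cornerPt n := by
  apply Subtype.ext
  show xiA (cornerPt n, s) = (cornerPt n).1
  rw [xiA]
  rw [if_neg (by rw [cornerPt_coord]; norm_num)]
  funext j
  by_cases hj : j = Fin.last n
  · simp only [sigp, if_pos hj, cornerPt_coord, if_true]; ring
  · simp only [sigp, if_neg hj, cornerPt_coord, if_true]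

lemma Xi_inJ {p : ↥(bdry (n+1))} {s : ℝ} (hp : inJ p.1) : inJ (Xi (p, s)).1 := by
  have hs0 := cl_nonneg s
  have hs1 := cl_le_one s
  show inJ (xiA (p, s))
  rw [xiA]
  split_ifs with hv hb
  · -- bz1 : v = 0, dd = 1
    have hd1 : dd p.1 = 1 := dd_eq_one_of_bottom_inJ hv hp
    have hddn : dd (bz1 (p, s)) = (1 + cl s) * dd p.1 := by
      apply dd_eq_mul (by linarith)
      intro i
      simp only [bz1, if_neg (Fin.castSucc_lt_last i).ne, if_true]
      ring
    rw [inJ, hddn, hd1]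
    simp only [bz1, if_pos rfl, if_true]
    linarith
  · -- bz2 : v = 0, dd = 1
    have hd1 : dd p.1 = 1 := dd_eq_one_of_bottom_inJ hv hp
    have hM : Mz (p, s) = 1 := by
      rw [Mz, hd1]
      exact max_eq_left (inv_one_add_cl_le_one s)
    have hddn : dd (bz2 (p, s)) = 1 * dd p.1 := by
      apply dd_eq_mul zero_le_one
      intro i
      simp only [bz2, if_neg (Fin.castSucc_lt_last i).ne, hM, if_true]
      ring
    rw [inJ, hddn, hd1]
    simp only [bz2, if_pos rfl, hM, if_true]
    linarith
  · -- sigp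
    have hddn : dd (sigp (p, s)) = 1 * dd p.1 := by
      apply dd_eq_mul zero_le_one
      intro i
      simp only [sigp, if_neg (Fin.castSucc_lt_last i).ne, if_true]
      ring
    rw [inJ, hddn, one_mul]
    simp only [sigp, if_pos rfl, if_true]
    have hv1 := (p.2.1 (Fin.last n)).2
    rw [inJ] at hp
    nlinarith
  done

lemma Xi_top {p : ↥(bdry (n+1))} {s : ℝ} (hp : inJ p.1) (hs : cl s = 1) :
    (Xi (p, s)).1 (Fin.last n) = 1 := by
  show xiA (p, s) (Fin.last n) = 1
  rw [xiA]
  have hcl : cl (p, s).2 = 1 := hs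
  split_ifs with hv hb
  · exfalso
    have hd1 : dd p.1 = 1 := dd_eq_one_of_bottom_inJ hv hp
    rw [hcl] at hb
    have : dd (p, s).1.1 = 1 := hd1
    rw [this] at hb
    norm_num at hb
  · have hd1 : dd p.1 = 1 := dd_eq_one_of_bottom_inJ hv hp
    have hM : Mz (p, s) = 1 := by
      rw [Mz, hcl]
      have : dd (p, s).1.1 = 1 := hd1
      rw [this]
      exact max_eq_left (by norm_num)
    simp only [bz2, if_pos rfl, hM, hcl, if_true]
    ring
  · simp only [sigp, if_pos rfl, hcl, if_true]
    ring


/-! ### the corner collapse map C -/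

noncomputable def cw (z : ↥(bdry (n+1)) × ℝ) : Fin (n+1) → ℝ :=
  fun j => cen z.1.1 j + (cl z.2 * max (2 * z.1.1 (Fin.last n) - 1) 0) * (1 - cen z.1.1 j)

lemma cw_cont : Continuous (cw (n := n)) := by
  refine continuous_pi fun j => ?_
  have hc : Continuous fun z : ↥(bdry (n+1)) × ℝ => cen z.1.1 j :=
    (continuous_const.mul (coord_cont j)).sub continuous_const
  refine hc.add (Continuous.mul ?_ (continuous_const.sub hc))
  exact cls_cont.mul (((continuous_const.mul (coord_cont _)).sub continuous_const).max
    continuous_const)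

lemma cw_eq_cen {z : ↥(bdry (n+1)) × ℝ} (h : 2 * z.1.1 (Fin.last n) - 1 ≤ 0) :
    cw z = cen z.1.1 := by
  funext j
  rw [cw, max_eq_right h]
  ring

lemma cw_norm_pos (z : ↥(bdry (n+1)) × ℝ) : 0 < ‖cw z‖ := by
  rcases le_or_gt (2 * z.1.1 (Fin.last n) - 1) 0 with h | h
  · rw [cw_eq_cen h, cen_norm_one z.1.2]
    norm_num
  · have hv1 : z.1.1 (Fin.last n) ≤ 1 := (z.1.2.1 (Fin.last n)).2
    have hρ : 0 ≤ cl z.2 * max (2 * z.1.1 (Fin.last n) - 1) 0 :=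
      mul_nonneg (cl_nonneg _) (le_max_right _ _)
    have hlast : 0 < cw z (Fin.last n) := by
      rw [cw, max_eq_left h.le]
      have : cen z.1.1 (Fin.last n) = 2 * z.1.1 (Fin.last n) - 1 := rfl
      rw [this]
      nlinarith [mul_nonneg (mul_nonneg (cl_nonneg z.2) h.le) (by linarith : (0:ℝ) ≤ 1 - (2 * z.1.1 (Fin.last n) - 1))]
    calc (0:ℝ) < cw z (Fin.last n) := hlast
      _ ≤ |cw z (Fin.last n)| := le_abs_self _
      _ ≤ ‖cw z‖ := abs_le_pi_norm _ _

lemma cw_scaled_norm (z : ↥(bdry (n+1)) × ℝ) : ‖‖cw z‖⁻¹ • cw z‖ = 1 := by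
  rw [norm_smul, Real.norm_eq_abs, abs_of_nonneg (inv_nonneg.2 (norm_nonneg _)),
    inv_mul_cancel₀ (cw_norm_pos z).ne']

noncomputable def Cmap (z : ↥(bdry (n+1)) × ℝ) : ↥(bdry (n+1)) :=
  ⟨dec (‖cw z‖⁻¹ • cw z), dec_mem (cw_scaled_norm z)⟩

lemma Cmap_cont : Continuous (Cmap (n := n)) := by
  refine Continuous.subtype_mk (dec_cont.comp ?_) _
  exact Continuous.smul ((continuous_norm.comp cw_cont).inv₀
    fun z => (cw_norm_pos z).ne') cw_cont

lemma Cmap_of_cen {z : ↥(bdry (n+1)) × ℝ} (h : cw z = cen z.1.1) : Cmap z = z.1 := by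
  apply Subtype.ext
  show dec (‖cw z‖⁻¹ • cw z) = z.1.1
  rw [h, cen_norm_one z.1.2, inv_one, one_smul, dec_cen]

lemma Cmap_zero {p : ↥(bdry (n+1))} {s : ℝ} (hs : cl s = 0) : Cmap (p, s) = p := by
  apply Cmap_of_cen
  funext j
  show cen p.1 j + (cl s * _) * (1 - cen p.1 j) = cen p.1 j
  rw [hs]
  ring

lemma cen_corner : cen (cornerPt n).1 = fun _ => 1 := by
  funext j
  show 2 * 1 - 1 = (1:ℝ)
  norm_num

lemma Cmap_corner (s : ℝ) : Cmap (cornerPt n, s) = cornerPt n := by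
  apply Cmap_of_cen
  funext j
  show cen (cornerPt n).1 j + _ * (1 - cen (cornerPt n).1 j) = cen (cornerPt n).1 j
  rw [cen_corner]
  ring

lemma Cmap_top {p : ↥(bdry (n+1))} {s : ℝ} (hv : p.1 (Fin.last n) = 1) (hs : cl s = 1) :
    Cmap (p, s) = cornerPt n := by
  have hcw : cw (p, s) = fun _ => 1 := by
    funext j
    show cen p.1 j + (cl s * max (2 * p.1 (Fin.last n) - 1) 0) * (1 - cen p.1 j) = 1
    rw [hv, hs]
    norm_num
  apply Subtype.ext
  show dec (‖cw (p, s)‖⁻¹ • cw (p, s)) = (cornerPt n).1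
  have h1 : ‖cw (p, s)‖ = 1 := by
    rw [hcw, ← cen_corner, cen_norm_one (cornerPt n).2]
  rw [h1, inv_one, one_smul, hcw]
  funext j
  show ((1:ℝ) + 1) / 2 = 1
  norm_num

lemma inJ_dec {y : Fin (n+1) → ℝ}
    (h : -‖fun i : Fin n => y (Fin.castSucc i)‖ ≤ y (Fin.last n)) : inJ (dec y) := by
  rw [inJ]
  have h1 : dd (dec y) = ‖fun i : Fin n => y (Fin.castSucc i)‖ := by
    rw [dd]
    congr 1
    funext i
    show 2 * ((y (Fin.castSucc i) + 1) / 2) - 1 = y (Fin.castSucc i)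
    ring
  have h2 : 2 * dec y (Fin.last n) - 1 = y (Fin.last n) := by
    show 2 * ((y (Fin.last n) + 1) / 2) - 1 = y (Fin.last n)
    ring
  rw [h1, h2]
  exact h

lemma Cmap_inJ {p : ↥(bdry (n+1))} {s : ℝ} (hp : inJ p.1) : inJ (Cmap (p, s)).1 := by
  show inJ (dec (‖cw (p, s)‖⁻¹ • cw (p, s)))
  apply inJ_dec
  set c : ℝ := ‖cw (p, s)‖⁻¹ with hc
  have hc0 : 0 ≤ c := inv_nonneg.2 (norm_nonneg _)
  have hr : (fun i : Fin n => (c • cw (p, s)) (Fin.castSucc i))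
      = c • (fun i : Fin n => cw (p, s) (Fin.castSucc i)) := rfl
  have hl : (c • cw (p, s)) (Fin.last n) = c * cw (p, s) (Fin.last n) := rfl
  rw [hr, hl, norm_smul, Real.norm_eq_abs, abs_of_nonneg hc0]
  have key : -‖fun i : Fin n => cw (p, s) (Fin.castSucc i)‖ ≤ cw (p, s) (Fin.last n) := by
    rcases le_or_gt (2 * p.1 (Fin.last n) - 1) 0 with h | h
    · have := cw_eq_cen (z := (p, s)) h
      rw [this]
      have h1 : (fun i : Fin n => cen p.1 (Fin.castSucc i))
          = fun i : Fin n => 2 * p.1 (Fin.castSucc i) - 1 := rfl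
      have h2 : cen p.1 (Fin.last n) = 2 * p.1 (Fin.last n) - 1 := rfl
      rw [h1, h2]
      exact hp
    · have hv1 : p.1 (Fin.last n) ≤ 1 := (p.2.1 (Fin.last n)).2
      have h0 : 0 ≤ cw (p, s) (Fin.last n) := by
        show 0 ≤ cen p.1 (Fin.last n)
            + (cl s * max (2 * p.1 (Fin.last n) - 1) 0) * (1 - cen p.1 (Fin.last n))
        rw [max_eq_left h.le]
        have he : cen p.1 (Fin.last n) = 2 * p.1 (Fin.last n) - 1 := rfl
        rw [he]
        nlinarith [mul_nonneg (cl_nonneg s) h.le]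
      calc -‖fun i : Fin n => cw (p, s) (Fin.castSucc i)‖ ≤ 0 := neg_nonpos.2 (norm_nonneg _)
        _ ≤ cw (p, s) (Fin.last n) := h0
  calc -(c * ‖fun i : Fin n => cw (p, s) (Fin.castSucc i)‖)
      = c * -‖fun i : Fin n => cw (p, s) (Fin.castSucc i)‖ := by ring
    _ ≤ c * cw (p, s) (Fin.last n) := mul_le_mul_of_nonneg_left key hc0

/-! ### the full homotopy Q -/

noncomputable def Qmap (z : ↥(bdry (n+1)) × ℝ) : ↥(bdry (n+1)) :=
  if z.2 ≤ 1/2 then Xi (z.1, 2*z.2) else Cmap (Xi (z.1, 1), 2*z.2 - 1)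

lemma Qmap_cont : Continuous (Qmap (n := n)) := by
  apply Continuous.if
  · intro z hz
    have hz' : z.2 = 1/2 := frontier_le_subset_eq continuous_snd continuous_const hz
    have h2 : 2 * z.2 = 1 := by rw [hz']; norm_num
    rw [h2]
    exact (Cmap_zero (by norm_num [cl])).symm
  · exact Xi_cont.comp (continuous_fst.prodMk (continuous_const.mul continuous_snd))
  · refine Cmap_cont.comp (Continuous.prodMk ?_ ?_)
    · exact Xi_cont.comp (continuous_fst.prodMk continuous_const)
    · exact (continuous_const.mul continuous_snd).sub continuous_const

lemma Qmap_zero (p : ↥(bdry (n+1))) : Qmap (p, 0) = p := by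
  rw [Qmap]
  rw [if_pos (by norm_num : (0:ℝ) ≤ 1/2)]
  exact Xi_s_eq (by norm_num [cl])

lemma Qmap_corner (s : ℝ) : Qmap (cornerPt n, s) = cornerPt n := by
  rw [Qmap]
  split_ifs
  · exact Xi_corner _
  · rw [Xi_corner]
    exact Cmap_corner _

lemma Qmap_inJ {p : ↥(bdry (n+1))} {s : ℝ} (hp : inJ p.1) : inJ (Qmap (p, s)).1 := by
  rw [Qmap]
  split_ifs
  · exact Xi_inJ hp
  · exact Cmap_inJ (Xi_inJ hp)

lemma Qmap_one {p : ↥(bdry (n+1))} (hp : inJ p.1) : Qmap (p, 1) = cornerPt n := by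
  rw [Qmap]
  rw [if_neg (by norm_num : ¬((1:ℝ) ≤ 1/2))]
  exact Cmap_top (Xi_top hp cl_one) (by norm_num [cl])


/-! ### the inclusion ι : Iⁿ → ∂Iⁿ⁺¹ (bottom face, clamped) -/

noncomputable def iot (t : Fin n → ℝ) : ↥(bdry (n+1)) :=
  ⟨fun j => if h : (j:ℕ) < n then cl (t ⟨j, h⟩) else 0, by
    constructor
    · intro j
      by_cases h : (j:ℕ) < n
      · simp only [dif_pos h]; exact cl_mem _
      · simp only [dif_neg h]; exact ⟨le_refl 0, zero_le_one⟩
    · refine ⟨Fin.last n, Or.inl ?_⟩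
      show dite _ _ _ = _
      rw [dif_neg (by simp)]⟩

lemma iot_cont : Continuous (iot (n := n)) := by
  refine Continuous.subtype_mk (continuous_pi fun j => ?_) _
  by_cases h : (j:ℕ) < n
  · simp only [dif_pos h]
    exact cl_cont.comp (continuous_apply _)
  · simp only [dif_neg h]
    exact continuous_const

lemma iot_cast (t : Fin n → ℝ) (i : Fin n) : (iot t).1 (Fin.castSucc i) = cl (t i) := by
  show dite _ _ _ = _
  rw [dif_pos (by simpa using i.isLt)]
  congr 1

lemma iot_last (t : Fin n → ℝ) : (iot t).1 (Fin.last n) = 0 := by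
  show dite _ _ _ = _
  rw [dif_neg (by simp)]

lemma iot_inJ {t : Fin n → ℝ} (ht : t ∈ bdry n) : inJ (iot t).1 := by
  obtain ⟨hc, j, hj⟩ := ht
  have h1 : (1:ℝ) ≤ dd (iot t).1 := by
    refine le_trans ?_ (abs_le_dd (iot t).1 j)
    rw [iot_cast, cl_of_mem (hc j)]
    rcases hj with h | h <;> rw [h] <;> norm_num
  rw [inJ, iot_last]
  linarith

lemma iot_sect {p : ↥(bdry (n+1))} (hp : p.1 (Fin.last n) = 0) :
    iot (fun i => p.1 (Fin.castSucc i)) = p := by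
  apply Subtype.ext
  funext j
  show dite _ _ _ = _
  by_cases h : (j:ℕ) < n
  · rw [dif_pos h]
    have he : Fin.castSucc (⟨(j:ℕ), h⟩ : Fin n) = j := Fin.ext (by simp)
    show cl (p.1 (Fin.castSucc ⟨(j:ℕ), h⟩)) = p.1 j
    rw [he, cl_of_mem (p.2.1 j)]
  · rw [dif_neg h]
    have hj : j = Fin.last n := Fin.ext (by
      have := j.isLt
      simp only [Fin.val_last]
      omega)
    rw [hj]
    exact hp.symm

/-! ### the induced maps and homotopies -/

variable {x₀ : X}

noncomputable def PhiZ (x₀ : X) (f : {f : (Fin n → ℝ) → X // IsAbsMap n x₀ f}) :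
    {g : bdry (n+1) → X // IsSphMap n x₀ g} :=
  ⟨sphExt n x₀ f.1, isSphMap_sphExt f.2⟩

noncomputable def PsiZ (x₀ : X) (h : {g : bdry (n+1) → X // IsSphMap n x₀ g}) :
    {f : (Fin n → ℝ) → X // IsAbsMap n x₀ f} :=
  ⟨fun t => h.1 (Qmap (iot t, 1)),
    h.2.1.comp (Qmap_cont.comp (iot_cont.prodMk continuous_const)),
    fun t ht => by
      show h.1 (Qmap (iot t, 1)) = _
      rw [Qmap_one (iot_inJ ht)]
      exact h.2.2⟩

lemma W1 {f g : {f : (Fin n → ℝ) → X // IsAbsMap n x₀ f}} (hfg : AbsHtp n x₀ f g) :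
    SphHtp n x₀ (PhiZ x₀ f) (PhiZ x₀ g) := by
  obtain ⟨H, hH, h0, h1, hb⟩ := hfg
  refine ⟨fun z => if z.1.1 (Fin.last n) = 0
      then H (fun j => z.1.1 j.castSucc, cl z.2) else x₀, cont_glue hH hb, ?_, ?_, ?_⟩
  · intro p
    show (if p.1 (Fin.last n) = 0 then H (fun j => p.1 j.castSucc, cl 0) else x₀)
        = sphExt n x₀ f.1 p
    rw [sphExt, cl_zero]
    by_cases h : p.1 (Fin.last n) = 0
    · rw [if_pos h, if_pos h]
      exact h0 _ (fun j => p.2.1 _)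
    · rw [if_neg h, if_neg h]
  · intro p
    show (if p.1 (Fin.last n) = 0 then H (fun j => p.1 j.castSucc, cl 1) else x₀)
        = sphExt n x₀ g.1 p
    rw [sphExt, cl_one]
    by_cases h : p.1 (Fin.last n) = 0
    · rw [if_pos h, if_pos h]
      exact h1 _ (fun j => p.2.1 _)
    · rw [if_neg h, if_neg h]
  · intro s _
    exact if_neg (by norm_num [cornerPt])

lemma W2 {g g' : {g : bdry (n+1) → X // IsSphMap n x₀ g}} (hgg : SphHtp n x₀ g g') :
    AbsHtp n x₀ (PsiZ x₀ g) (PsiZ x₀ g') := by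
  obtain ⟨H, hH, h0, h1, hc⟩ := hgg
  refine ⟨fun z => H (Qmap (iot z.1, 1), cl z.2), ?_, ?_, ?_, ?_⟩
  · refine hH.comp (Continuous.prodMk ?_ (cl_cont.comp continuous_snd))
    exact Qmap_cont.comp ((iot_cont.comp continuous_fst).prodMk continuous_const)
  · intro t _
    show H (Qmap (iot t, 1), cl 0) = _
    rw [cl_zero]
    exact h0 _
  · intro t _
    show H (Qmap (iot t, 1), cl 1) = _
    rw [cl_one]
    exact h1 _
  · intro s _ t ht
    show H (Qmap (iot t, 1), cl s) = x₀
    rw [Qmap_one (iot_inJ ht)]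
    exact hc _ (cl_mem s)

lemma LI (f : {f : (Fin n → ℝ) → X // IsAbsMap n x₀ f}) :
    AbsHtp n x₀ (PsiZ x₀ (PhiZ x₀ f)) f := by
  refine ⟨fun z => if z.2 ≤ 1/2
      then sphExt n x₀ f.1 (Qmap (iot z.1, 1 - 2*z.2))
      else f.1 (fun j => (1 - cl (2*z.2 - 1)) * cl (z.1 j) + cl (2*z.2 - 1) * z.1 j),
    ?_, ?_, ?_, ?_⟩
  · apply Continuous.if
    · intro z hz
      have hz' : z.2 = 1/2 := frontier_le_subset_eq continuous_snd continuous_const hz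
      have e1 : 1 - 2*z.2 = 0 := by rw [hz']; norm_num
      have e2 : cl (2*z.2 - 1) = 0 := by rw [hz']; norm_num [cl]
      rw [e1, e2, Qmap_zero, sphExt, if_pos (iot_last z.1)]
      exact congrArg f.1 (funext fun j => by rw [iot_cast]; ring)
    · refine (sphExt_cont f.2).comp (Qmap_cont.comp (Continuous.prodMk ?_ ?_))
      · exact iot_cont.comp continuous_fst
      · exact continuous_const.sub (continuous_const.mul continuous_snd)
    · refine f.2.1.comp (continuous_pi fun j => ?_)
      have hcl2 : Continuous fun z : (Fin n → ℝ) × ℝ => cl (2*z.2 - 1) :=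
        cl_cont.comp ((continuous_const.mul continuous_snd).sub continuous_const)
      exact ((continuous_const.sub hcl2).mul
        (cl_cont.comp ((continuous_apply j).comp continuous_fst))).add
        (hcl2.mul ((continuous_apply j).comp continuous_fst))
  · intro t _
    show (if (0:ℝ) ≤ 1/2 then sphExt n x₀ f.1 (Qmap (iot t, 1 - 2*0))
      else f.1 (fun j => (1 - cl (2*0 - 1)) * cl (t j) + cl (2*0 - 1) * t j))
      = (PsiZ x₀ (PhiZ x₀ f)).1 t
    rw [if_pos (by norm_num : (0:ℝ) ≤ 1/2)]
    have e1 : (1:ℝ) - 2*0 = 1 := by norm_num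
    rw [e1]
    rfl
  · intro t _
    show (if (1:ℝ) ≤ 1/2 then sphExt n x₀ f.1 (Qmap (iot t, 1 - 2*1))
      else f.1 (fun j => (1 - cl (2*1 - 1)) * cl (t j) + cl (2*1 - 1) * t j)) = f.1 t
    rw [if_neg (by norm_num : ¬((1:ℝ) ≤ 1/2))]
    have e2 : cl (2*(1:ℝ) - 1) = 1 := by norm_num [cl]
    exact congrArg f.1 (funext fun j => by rw [e2]; ring)
  · intro s hs t ht
    show (if s ≤ 1/2 then sphExt n x₀ f.1 (Qmap (iot t, 1 - 2*s))
      else f.1 (fun j => (1 - cl (2*s - 1)) * cl (t j) + cl (2*s - 1) * t j)) = x₀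
    split_ifs with h
    · exact sphExt_eq_of_inJ f.2 (Qmap_inJ (iot_inJ ht))
    · have : (fun j => (1 - cl (2*s - 1)) * cl (t j) + cl (2*s - 1) * t j) = t := by
        funext j
        rw [cl_of_mem (ht.1 j)]
        ring
      rw [this]
      exact f.2.2 t ht

lemma sphExt_PsiZ (g : {g : bdry (n+1) → X // IsSphMap n x₀ g}) (p : ↥(bdry (n+1))) :
    sphExt n x₀ (PsiZ x₀ g).1 p = g.1 (Qmap (p, 1)) := by
  rw [sphExt]
  split_ifs with hv
  · show g.1 (Qmap (iot _, 1)) = _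
    rw [iot_sect hv]
  · rw [Qmap_one (inJ_of_last_ne hv)]
    exact g.2.2.symm

lemma RI (g : {g : bdry (n+1) → X // IsSphMap n x₀ g}) :
    SphHtp n x₀ (PhiZ x₀ (PsiZ x₀ g)) g := by
  refine ⟨fun z => g.1 (Qmap (z.1, 1 - cl z.2)), ?_, ?_, ?_, ?_⟩
  · refine g.2.1.comp (Qmap_cont.comp (continuous_fst.prodMk ?_))
    exact continuous_const.sub (cl_cont.comp continuous_snd)
  · intro p
    show g.1 (Qmap (p, 1 - cl 0)) = sphExt n x₀ (PsiZ x₀ g).1 p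
    rw [cl_zero, sphExt_PsiZ]
    norm_num
  · intro p
    show g.1 (Qmap (p, 1 - cl 1)) = g.1 p
    rw [cl_one]
    have e : (1:ℝ) - 1 = 0 := by norm_num
    rw [e, Qmap_zero]
  · intro s _
    show g.1 (Qmap (cornerPt n, 1 - cl s)) = x₀
    rw [Qmap_corner]
    exact g.2.2

end Stmt13

open Stmt13

/-- `πₙ(X,x₀) ≅ [∂Iⁿ⁺¹, e ; X, x₀]`: the map induced by `sphExt` is a well-defined
bijection between the homotopy sets. -/
theorem stmt_13 (n : ℕ) (x₀ : X) :
    ∃ Φ : Quot (AbsHtp n x₀) → Quot (SphHtp n x₀),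
      Function.Bijective Φ ∧
      ∀ (f : (Fin n → ℝ) → X) (hf : IsAbsMap n x₀ f),
        ∃ hc : IsSphMap n x₀ (sphExt n x₀ f),
          Φ (Quot.mk _ ⟨f, hf⟩) = Quot.mk _ ⟨sphExt n x₀ f, hc⟩ := by
  classical
  have hLI : ∀ a, (Quot.lift (fun g => Quot.mk (AbsHtp n x₀) (PsiZ x₀ g))
      (fun a b hab => Quot.sound (W2 hab)))
      ((Quot.lift (fun f => Quot.mk (SphHtp n x₀) (PhiZ x₀ f))
      (fun a b hab => Quot.sound (W1 hab))) a) = a :=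
    Quot.ind fun f => Quot.sound (LI f)
  have hRI : ∀ b, (Quot.lift (fun f => Quot.mk (SphHtp n x₀) (PhiZ x₀ f))
      (fun a b hab => Quot.sound (W1 hab)))
      ((Quot.lift (fun g => Quot.mk (AbsHtp n x₀) (PsiZ x₀ g))
      (fun a b hab => Quot.sound (W2 hab))) b) = b :=
    Quot.ind fun g => Quot.sound (RI g)
  refine ⟨Quot.lift (fun f => Quot.mk (SphHtp n x₀) (PhiZ x₀ f))
      (fun a b hab => Quot.sound (W1 hab)), ⟨?_, fun b => ⟨_, hRI b⟩⟩,
      fun f hf => ⟨(PhiZ x₀ (⟨f, hf⟩ : {f : (Fin n → ℝ) → X // IsAbsMap n x₀ f})).2, rfl⟩⟩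
  intro a b hab
  rw [← hLI a, hab, hLI b]
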